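/- Let ε ≥ 0 and let P₀, P₁ be probability mass functions on a finite type R. Define δ₀ = Σ_{r ∈ R : P₀(r) > exp(ε)·P₁(r)} (P₀(r) − exp(ε)·P₁(r)) and δ₁ = Σ_{r ∈ R : P₁(r) > exp(ε)·P₀(r)} (P₁(r) − exp(ε)·P₀(r)), and set α₀ = 1−δ₀ and α₁ = 1−δ₁. Then exp(ε)·α₁ ≥ α₀ and exp(ε)·α₀ ≥ α₁. -/
import Mathlib

open Finset

/-- A probability mass function on a finite type: nonnegative and summing to 1. -/
def IsPMF {R : Type*} [Fintype R] (P : R → ℝ) : Prop :=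
  (∀ r, 0 ≤ P r) ∧ ∑ r, P r = 1

lemma alpha_ineq_aux (ε : ℝ) (hε : 0 ≤ ε) {R : Type*} [Fintype R]
    (P Q : R → ℝ) (hP : IsPMF P) (hQ : IsPMF Q) :
    Real.exp ε * (1 - ∑ r, max (Q r - Real.exp ε * P r) 0)
      ≥ 1 - ∑ r, max (P r - Real.exp ε * Q r) 0 := by
  have he : (1:ℝ) ≤ Real.exp ε := Real.one_le_exp hε
  have he0 : (0:ℝ) < Real.exp ε := Real.exp_pos ε
  have h1 : 1 - ∑ r, max (P r - Real.exp ε * Q r) 0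
      = ∑ r, min (P r) (Real.exp ε * Q r) := by
    rw [← hP.2, ← Finset.sum_sub_distrib]
    congr 1; ext r
    rcases le_total (P r - Real.exp ε * Q r) 0 with h | h
    · rw [max_eq_right h, min_eq_left (by linarith)]; ring
    · rw [max_eq_left h, min_eq_right (by linarith)]; ring
  have h2 : Real.exp ε * (1 - ∑ r, max (Q r - Real.exp ε * P r) 0)
      = ∑ r, Real.exp ε * min (Q r) (Real.exp ε * P r) := by
    have : 1 - ∑ r, max (Q r - Real.exp ε * P r) 0
        = ∑ r, min (Q r) (Real.exp ε * P r) := by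
      rw [← hQ.2, ← Finset.sum_sub_distrib]
      congr 1; ext r
      rcases le_total (Q r - Real.exp ε * P r) 0 with h | h
      · rw [max_eq_right h, min_eq_left (by linarith)]; ring
      · rw [max_eq_left h, min_eq_right (by linarith)]; ring
    rw [this, Finset.mul_sum]
  rw [ge_iff_le, h1, h2]
  apply Finset.sum_le_sum
  intro r _
  have hPr := hP.1 r
  have hQr := hQ.1 r
  rcases le_total (Q r) (Real.exp ε * P r) with h | h
  · rw [min_eq_left h]
    exact min_le_right _ _
  · rw [min_eq_right h]
    exact le_trans (min_le_left _ _) (by nlinarith [mul_nonneg (mul_nonneg (sub_nonneg.2 he) (by linarith : (0:ℝ) ≤ Real.exp ε + 1)) hPr])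

theorem alpha_ineq (ε : ℝ) (hε : 0 ≤ ε) {R : Type*} [Fintype R]
    (P0 P1 : R → ℝ) (hP0 : IsPMF P0) (hP1 : IsPMF P1)
    (δ0 δ1 : ℝ)
    (hδ0 : δ0 = ∑ r, max (P0 r - Real.exp ε * P1 r) 0)
    (hδ1 : δ1 = ∑ r, max (P1 r - Real.exp ε * P0 r) 0) :
    Real.exp ε * (1 - δ1) ≥ 1 - δ0 ∧ Real.exp ε * (1 - δ0) ≥ 1 - δ1 := by
  subst hδ0 hδ1
  exact ⟨alpha_ineq_aux ε hε P0 P1 hP0 hP1, alpha_ineq_aux ε hε P1 P0 hP1 hP0⟩
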